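/- Let k be an algebraically closed field of characteristic zero, let q be a nondegenerate quadratic form on k^4, and let L1, L2, L3, L4 be 2-dimensional linear subspaces of k^4 that pairwise intersect in the zero subspace and on each of which q vanishes identically. Then the set of 2-dimensional linear subspaces W of k^4 satisfying W ∩ Li ≠ 0 for all i = 1,2,3,4 is infinite. -/

import Mathlib

set_option maxHeartbeats 1000000
set_option synthInstance.maxHeartbeats 100000

open Module Submodule

private lemma alt_two_dim {k M : Type*} [Field k] [AddCommGroup M] [Module k M]
    (b : Basis (Fin 2) k M) (β : M →ₗ[k] M →ₗ[k] k)
    (hd : ∀ f, β f f = 0) (h01 : β (b 0) (b 1) = 0) : β = 0 := by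
  have hskew : ∀ f g, β f g = - β g f := by
    intro f g
    have h' := hd (f + g)
    simp only [map_add, LinearMap.add_apply, hd f, hd g] at h'
    linear_combination h'
  refine b.ext fun i => b.ext fun j => ?_
  have h10 : β (b 1) (b 0) = 0 := by rw [hskew, h01, neg_zero]
  fin_cases i <;> fin_cases j <;>
    simp [hd, h01, h10]

theorem stmt0
    (k : Type*) [Field k] [IsAlgClosed k] [CharZero k]
    (q : QuadraticForm k (Fin 4 → k))
    (hq : (QuadraticMap.polarBilin q).Nondegenerate)
    (L1 L2 L3 L4 : Submodule k (Fin 4 → k))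
    (h1 : Module.finrank k L1 = 2) (h2 : Module.finrank k L2 = 2)
    (h3 : Module.finrank k L3 = 2) (h4 : Module.finrank k L4 = 2)
    (h12 : L1 ⊓ L2 = ⊥) (h13 : L1 ⊓ L3 = ⊥) (h14 : L1 ⊓ L4 = ⊥)
    (h23 : L2 ⊓ L3 = ⊥) (h24 : L2 ⊓ L4 = ⊥) (h34 : L3 ⊓ L4 = ⊥)
    (hv1 : ∀ v ∈ L1, q v = 0) (hv2 : ∀ v ∈ L2, q v = 0)
    (hv3 : ∀ v ∈ L3, q v = 0) (hv4 : ∀ v ∈ L4, q v = 0) :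
    {W : Submodule k (Fin 4 → k) | Module.finrank k W = 2 ∧
      W ⊓ L1 ≠ ⊥ ∧ W ⊓ L2 ≠ ⊥ ∧ W ⊓ L3 ≠ ⊥ ∧ W ⊓ L4 ≠ ⊥}.Infinite := by
  classical
  set V := Fin 4 → k with hV
  set B : LinearMap.BilinForm k V := QuadraticMap.polarBilin q with hBset
  have hBdef : ∀ x y : V, B x y = q (x + y) - q x - q y := by
    intro x y
    simp [hBset, QuadraticMap.polarBilin_apply_apply, QuadraticMap.polar]
  have hBsymm : ∀ x y : V, B x y = B y x := by
    intro x y; rw [hBdef, hBdef, add_comm x y]; ring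
  have hiso : ∀ (L : Submodule k V), (∀ v ∈ L, q v = 0) →
      ∀ x ∈ L, ∀ y ∈ L, B x y = 0 := by
    intro L hv x hx y hy
    rw [hBdef, hv _ (L.add_mem hx hy), hv _ hx, hv _ hy]; ring
  have hdimV : Module.finrank k V = 4 := by
    show Module.finrank k (Fin 4 → k) = 4
    simp
  have hcompl : ∀ (M N : Submodule k V), Module.finrank k M = 2 →
      Module.finrank k N = 2 → M ⊓ N = ⊥ → IsCompl M N := by
    intro M N hM hN hMN
    have hsum := Submodule.finrank_sup_add_finrank_inf_eq M N
    rw [hMN, hM, hN, finrank_bot, add_zero] at hsum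
    exact ⟨disjoint_iff.2 hMN,
      codisjoint_iff.2 (Submodule.eq_top_of_finrank_eq (by rw [hsum, hdimV]))⟩
  have hc12 := hcompl L1 L2 h1 h2 h12
  have hc31 := hcompl L3 L1 h3 h1 (by rw [inf_comm]; exact h13)
  have hc41 := hcompl L4 L1 h4 h1 (by rw [inf_comm]; exact h14)
  -- graph maps
  set G3 : V →ₗ[k] V :=
    L3.subtype ∘ₗ Submodule.linearProjOfIsCompl L3 L1 hc31 - LinearMap.id with hG3
  set G4 : V →ₗ[k] V :=
    L4.subtype ∘ₗ Submodule.linearProjOfIsCompl L4 L1 hc41 - LinearMap.id with hG4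
  have hG3L3 : ∀ f : V, f + G3 f ∈ L3 := by
    intro f
    have : f + G3 f = ↑(Submodule.linearProjOfIsCompl L3 L1 hc31 f) := by
      simp [hG3]
    rw [this]; exact Submodule.coe_mem _
  have hG4L4 : ∀ f : V, f + G4 f ∈ L4 := by
    intro f
    have : f + G4 f = ↑(Submodule.linearProjOfIsCompl L4 L1 hc41 f) := by
      simp [hG4]
    rw [this]; exact Submodule.coe_mem _
  have hG3L1 : ∀ f : V, G3 f ∈ L1 := by
    intro f
    have h : (↑(Submodule.linearProjOfIsCompl L3 L1 hc31 f) : V) + ↑(Submodule.linearProjOfIsCompl L1 L3 hc31.symm f) = f :=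
      Submodule.projection_add_projection_eq_self hc31 f
    have hGf : G3 f = ↑(Submodule.linearProjOfIsCompl L3 L1 hc31 f) - f := by simp [hG3]
    have : G3 f = -(↑(Submodule.linearProjOfIsCompl L1 L3 hc31.symm f)) := by
      rw [hGf]; linear_combination h
    rw [this]; exact L1.neg_mem (Submodule.coe_mem _)
  have hG4L1 : ∀ f : V, G4 f ∈ L1 := by
    intro f
    have h : (↑(Submodule.linearProjOfIsCompl L4 L1 hc41 f) : V) + ↑(Submodule.linearProjOfIsCompl L1 L4 hc41.symm f) = f :=
      Submodule.projection_add_projection_eq_self hc41 f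
    have hGf : G4 f = ↑(Submodule.linearProjOfIsCompl L4 L1 hc41 f) - f := by simp [hG4]
    have : G4 f = -(↑(Submodule.linearProjOfIsCompl L1 L4 hc41.symm f)) := by
      rw [hGf]; linear_combination h
    rw [this]; exact L1.neg_mem (Submodule.coe_mem _)
  -- the graph map as an equivalence L2 ≃ L1
  set g : L2 →ₗ[k] L1 :=
    LinearMap.codRestrict L1 (G3 ∘ₗ L2.subtype) (fun f => hG3L1 f) with hg
  have hgapp : ∀ f : L2, (g f : V) = G3 ↑f := fun f => rfl
  have hginj : Function.Injective g := by
    rw [← LinearMap.ker_eq_bot]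
    refine LinearMap.ker_eq_bot'.2 fun f hf => ?_
    have h0 : G3 (f : V) = 0 := by rw [← hgapp, hf]; rfl
    have hmem : (f : V) ∈ L2 ⊓ L3 := by
      refine ⟨f.2, ?_⟩
      have := hG3L3 (f : V); rwa [h0, add_zero] at this
    rw [h23] at hmem
    exact Subtype.ext (by simpa using hmem)
  have hgbij : Function.Bijective g :=
    ⟨hginj, (LinearMap.injective_iff_surjective_of_finrank_eq_finrank
      (by rw [h2, h1])).1 hginj⟩
  set e : L2 ≃ₗ[k] L1 := LinearEquiv.ofBijective g hgbij with he
  have heapp : ∀ f : L2, (e f : V) = G3 ↑f := fun f => rfl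
  -- diagonal vanishing
  have hdiag : ∀ (G : V →ₗ[k] V) (L : Submodule k V), (∀ z : V, G z ∈ L1) →
      (∀ z : V, z + G z ∈ L) → (∀ v ∈ L, q v = 0) →
      ∀ f : V, f ∈ L2 → B f (G f) = 0 := by
    intro G L hL1 hL hv f hf
    rw [hBdef, hv _ (hL f), hv1 _ (hL1 f), hv2 _ hf]; ring
  have hdiag3 := hdiag G3 L3 hG3L1 hG3L3 hv3
  have hdiag4 := hdiag G4 L4 hG4L1 hG4L4 hv4
  -- basis of L2
  set b : Basis (Fin 2) k L2 := Module.finBasisOfFinrankEq k L2 h2 with hb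
  set t3 : k := B ↑(b 1) (G3 ↑(b 0)) with ht3def
  set t4 : k := B ↑(b 1) (G4 ↑(b 0)) with ht4def
  -- auxiliary bilinear forms on L2
  have mkβ : ∀ G : V →ₗ[k] V, ∃ β : L2 →ₗ[k] L2 →ₗ[k] k,
      ∀ f f' : L2, β f f' = B ↑f' (G ↑f) := by
    intro G
    refine ⟨LinearMap.mk₂ k (fun f f' : L2 => B (↑f' : V) (G ↑f))
      (fun m n p => by simp [map_add]) (fun c m p => by simp)
      (fun m n p => by simp [map_add]) (fun c m p => by simp), fun f f' => rfl⟩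
  have ht3 : t3 ≠ 0 := by
    intro h0
    obtain ⟨β3, hβ3⟩ := mkβ G3
    have hz : β3 = 0 := by
      refine alt_two_dim b β3 (fun f => ?_) (by rw [hβ3, ← ht3def, h0])
      rw [hβ3]; exact hdiag3 _ f.2
    -- then B (b 0) kills everything
    have hub : (↑(b 0) : V) = 0 := by
      refine hq.1 _ fun n => ?_
      have hn : n ∈ L1 ⊔ L2 := by rw [codisjoint_iff.1 hc12.2]; trivial
      obtain ⟨x, hx, y, hy, rfl⟩ := Submodule.mem_sup.1 hn
      have hx' : B ↑(b 0) x = 0 := by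
        obtain ⟨f, hf⟩ := hgbij.2 ⟨x, hx⟩
        have : G3 ↑f = x := by rw [← hgapp, hf]
        rw [← this]
        have h5 := hβ3 f (b 0)
        rw [hz, LinearMap.zero_apply, LinearMap.zero_apply] at h5
        exact h5.symm
      have hy' : B ↑(b 0) y = 0 := hiso L2 hv2 _ (b 0).2 _ hy
      rw [map_add, hx', hy', add_zero]
    exact b.ne_zero 0 (Submodule.coe_eq_zero.1 hub)
  set c : k := t4 / t3 with hc
  set D : V →ₗ[k] V := G4 - c • G3 with hD
  have hDapp : ∀ f : V, D f = G4 f - c • G3 f := fun f => rfl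
  have hDL1 : ∀ f : V, D f ∈ L1 := fun f =>
    L1.sub_mem (hG4L1 f) (L1.smul_mem _ (hG3L1 f))
  obtain ⟨βD, hβD⟩ := mkβ D
  have hβDzero : βD = 0 := by
    refine alt_two_dim b βD (fun f => ?_) ?_
    · rw [hβD, hDapp, map_sub, map_smul, hdiag3 _ f.2, hdiag4 _ f.2, smul_zero, sub_zero]
    · rw [hβD, hDapp, map_sub, map_smul, ← ht3def, ← ht4def, hc, smul_eq_mul,
        div_mul_cancel₀ _ ht3, sub_self]
  have hprop : ∀ f : L2, G4 (f : V) = c • G3 (f : V) := by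
    intro f
    have hDf : D (f : V) = 0 := by
      refine hq.1 _ fun n => ?_
      have hn : n ∈ L1 ⊔ L2 := by rw [codisjoint_iff.1 hc12.2]; trivial
      obtain ⟨x, hx, y, hy, rfl⟩ := Submodule.mem_sup.1 hn
      have hx' : B (D ↑f) x = 0 := hiso L1 hv1 _ (hDL1 _) _ hx
      have hy' : B (D ↑f) y = 0 := by
        rw [hBsymm]
        have h5 := hβD f ⟨y, hy⟩
        rw [hβDzero, LinearMap.zero_apply, LinearMap.zero_apply] at h5
        exact h5.symm
      rw [map_add, hx', hy', add_zero]
    have h6 := hDapp (f : V)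
    rw [hDf] at h6
    exact sub_eq_zero.1 h6.symm
  -- construction of the family of transversal planes
  set a : Basis (Fin 2) k L1 := Module.finBasisOfFinrankEq k L1 h1 with ha
  set X : k → L1 := fun t => a 0 + t • a 1 with hX
  have hXrepr0 : ∀ t, a.repr (X t) 0 = 1 := by
    intro t; simp [hX, Finsupp.single_apply]
  have hXrepr1 : ∀ t, a.repr (X t) 1 = t := by
    intro t; simp [hX, Finsupp.single_apply]
  have hXne : ∀ t, X t ≠ 0 := by
    intro t h0
    have := hXrepr0 t
    rw [h0] at this
    simp at this
  set w : k → V := fun t => ↑(e.symm (X t)) with hw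
  have hwL2 : ∀ t, w t ∈ L2 := fun t => Submodule.coe_mem _
  have hwne : ∀ t, w t ≠ 0 := by
    intro t h0
    exact hXne t (by simpa using (e.symm.map_eq_zero_iff).1 (Subtype.ext h0 : e.symm (X t) = 0))
  have hG3w : ∀ t, G3 (w t) = ↑(X t) := by
    intro t
    have h7 : e (e.symm (X t)) = X t := e.apply_symm_apply (X t)
    have := congrArg (Subtype.val) h7
    rw [← heapp]
    exact this
  have hG4w : ∀ t, G4 (w t) = c • ↑(X t) := by
    intro t
    have h8 : G4 (w t) = c • G3 (w t) := hprop (e.symm (X t))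
    rw [h8, hG3w]
  set W : k → Submodule k V := fun t => span k {(↑(X t) : V), w t} with hW
  have hindep : ∀ t (α β : k), α • (↑(X t) : V) + β • w t = 0 → α = 0 ∧ β = 0 := by
    intro t α β h0
    have hmem : α • (↑(X t) : V) ∈ L1 ⊓ L2 := by
      constructor
      · exact L1.smul_mem _ (Submodule.coe_mem _)
      · have : α • (↑(X t) : V) = -(β • w t) := by linear_combination h0
        rw [this]
        exact L2.neg_mem (L2.smul_mem _ (hwL2 t))
    rw [h12] at hmem
    have hα : α • (↑(X t) : V) = 0 := by simpa using hmem
    have hβ : β • w t = 0 := by linear_combination h0 - hα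
    constructor
    · rcases smul_eq_zero.1 hα with h' | h'
      · exact h'
      · exact absurd (by exact_mod_cast h' : (X t : V) = 0)
          (fun hh => hXne t (Subtype.ext (by simpa using hh)))
    · rcases smul_eq_zero.1 hβ with h' | h'
      · exact h'
      · exact absurd h' (hwne t)
  have hXne' : ∀ t, (↑(X t) : V) ≠ 0 := by
    intro t h0
    exact hXne t (Subtype.ext (by simpa using h0))
  have hWrank : ∀ t, Module.finrank k (W t) = 2 := by
    intro t
    have hsplit : W t = (k ∙ (↑(X t) : V)) ⊔ (k ∙ w t) := by
      rw [hW]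
      exact Submodule.span_insert _ _
    have hinf : (k ∙ (↑(X t) : V)) ⊓ (k ∙ w t) = ⊥ := by
      rw [← le_bot_iff, ← h12]
      exact inf_le_inf ((Submodule.span_singleton_le_iff_mem _ _).2 (Submodule.coe_mem _))
        ((Submodule.span_singleton_le_iff_mem _ _).2 (hwL2 t))
    have hsum := Submodule.finrank_sup_add_finrank_inf_eq (k ∙ (↑(X t) : V)) (k ∙ w t)
    rw [hinf, finrank_bot, add_zero, finrank_span_singleton (hXne' t),
      finrank_span_singleton (hwne t)] at hsum
    rw [hsplit, hsum]
  have hXmemW : ∀ t, (↑(X t) : V) ∈ W t := fun t =>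
    Submodule.subset_span (Set.mem_insert _ _)
  have hwmemW : ∀ t, w t ∈ W t := fun t =>
    Submodule.subset_span (Set.mem_insert_of_mem _ rfl)
  have hmemset : ∀ t, W t ∈ {W : Submodule k (Fin 4 → k) | Module.finrank k W = 2 ∧
      W ⊓ L1 ≠ ⊥ ∧ W ⊓ L2 ≠ ⊥ ∧ W ⊓ L3 ≠ ⊥ ∧ W ⊓ L4 ≠ ⊥} := by
    intro t
    refine ⟨hWrank t, ?_, ?_, ?_, ?_⟩
    · exact (Submodule.ne_bot_iff _).2 ⟨↑(X t), ⟨hXmemW t, Submodule.coe_mem _⟩, hXne' t⟩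
    · exact (Submodule.ne_bot_iff _).2 ⟨w t, ⟨hwmemW t, hwL2 t⟩, hwne t⟩
    · refine (Submodule.ne_bot_iff _).2 ⟨w t + ↑(X t), ⟨?_, ?_⟩, ?_⟩
      · exact (W t).add_mem (hwmemW t) (hXmemW t)
      · have := hG3L3 (w t); rwa [hG3w t] at this
      · intro h0
        have : (1 : k) • (↑(X t) : V) + (1 : k) • w t = 0 := by
          rw [one_smul, one_smul]; linear_combination h0
        exact one_ne_zero ((hindep t 1 1 this).1)
    · refine (Submodule.ne_bot_iff _).2 ⟨w t + c • ↑(X t), ⟨?_, ?_⟩, ?_⟩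
      · exact (W t).add_mem (hwmemW t) ((W t).smul_mem _ (hXmemW t))
      · have := hG4L4 (w t); rwa [hG4w t] at this
      · intro h0
        have : c • (↑(X t) : V) + (1 : k) • w t = 0 := by
          rw [one_smul]; linear_combination h0
        exact one_ne_zero ((hindep t c 1 this).2)
  have hWinj : Function.Injective W := by
    intro t s hts
    have hXtW : (↑(X t) : V) ∈ W s := hts ▸ hXmemW t
    obtain ⟨α, β, hαβ⟩ := Submodule.mem_span_pair.1 hXtW
    have hβ0 : β • w s = 0 := by
      have hmem : β • w s ∈ L1 ⊓ L2 := by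
        constructor
        · have : β • w s = (↑(X t) : V) - α • ↑(X s) := by linear_combination hαβ
          rw [this]
          exact L1.sub_mem (Submodule.coe_mem _) (L1.smul_mem _ (Submodule.coe_mem _))
        · exact L2.smul_mem _ (hwL2 s)
      rw [h12] at hmem; simpa using hmem
    have hXeq : (↑(X t) : V) = α • ↑(X s) := by linear_combination hβ0 - hαβ
    have hXeq' : X t = α • X s := Subtype.ext (by simpa using hXeq)
    have h0 := congrArg (fun z => a.repr z 0) hXeq'
    have h1' := congrArg (fun z => a.repr z 1) hXeq'
    simp only [map_smul, Finsupp.smul_apply, smul_eq_mul] at h0 h1'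
    rw [hXrepr0, hXrepr0] at h0
    rw [hXrepr1, hXrepr1] at h1'
    have hα1 : α = 1 := by simpa using h0.symm
    rw [hα1, one_mul] at h1'
    exact h1'
  exact Set.infinite_of_injective_forall_mem hWinj hmemset
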